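/- Let n ≥ 0 (the normalized test-channel noise variance σ_N²/v) and let D̄ satisfy 0 < D̄ ≤ v·r. Set Q̄ = v·((r−ρ²) + r·n)/D̄ − n. Then Q̄ ≥ 1 − ρ²/r, and for α ∈ ℝ one has D_P(α, v·n) = D̄ if and only if Q(α) = Q̄, if and only if α = −ρ/r + √((Q̄ − (1−ρ²/r))/r) or α = −ρ/r − √((Q̄ − (1−ρ²/r))/r). Among these two roots, the one with the plus sign yields the smaller distortion D_C(·, v·n). -/

import Mathlib

/-- `Q α = 1 + 2αρ + α²r`, the normalized second moment of `Y = X + αθ` (divided by `v`). -/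
noncomputable def Q (ρ r α : ℝ) : ℝ := 1 + 2 * α * ρ + α ^ 2 * r

/-- Distortion `D_C(α, s) = E(X − E[X|Y])²` for `Y = X + αθ + S`, `S ~ N(0, s)`. -/
noncomputable def DC (v ρ r α s : ℝ) : ℝ :=
  v * (1 - (1 + α * ρ) ^ 2 / (Q ρ r α + s / v))

/-- Privacy level `D_P(α, s) = E(θ − E[θ|Y])²` for `Y = X + αθ + S`, `S ~ N(0, s)`. -/
noncomputable def DP (v ρ r α s : ℝ) : ℝ :=
  v * (r - (ρ + r * α) ^ 2 / (Q ρ r α + s / v))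
/-- The target value of `Q(α)` in the compression setting with normalized test-channel noise
variance `n` and privacy level `D̄`. -/
noncomputable def Qbar (v ρ r n D : ℝ) : ℝ := v * ((r - ρ ^ 2) + r * n) / D - n

/-- Compression setting (Theorem 3): for test-channel noise variance `v·n` and privacy level
`D̄ ∈ (0, vr]`, one has `Q̄ ≥ 1 − ρ²/r`; the privacy constraint `D_P(α, vn) = D̄` holds iff
`Q(α) = Q̄` iff `α = −ρ/r ± √((Q̄ − (1−ρ²/r))/r)`, and the plus-root achieves the smaller
distortion. -/
theorem compression_roots (v ρ r n D : ℝ) (hv : 0 < v) (hρ : 0 ≤ ρ) (hr : ρ ^ 2 < r)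
    (hn : 0 ≤ n) (hD0 : 0 < D) (hD : D ≤ v * r) :
    1 - ρ ^ 2 / r ≤ Qbar v ρ r n D ∧
    (∀ α : ℝ,
      (DP v ρ r α (v * n) = D ↔ Q ρ r α = Qbar v ρ r n D) ∧
      (DP v ρ r α (v * n) = D ↔
        α = -ρ / r + Real.sqrt ((Qbar v ρ r n D - (1 - ρ ^ 2 / r)) / r) ∨
        α = -ρ / r - Real.sqrt ((Qbar v ρ r n D - (1 - ρ ^ 2 / r)) / r))) ∧
    DC v ρ r (-ρ / r + Real.sqrt ((Qbar v ρ r n D - (1 - ρ ^ 2 / r)) / r)) (v * n)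
      ≤ DC v ρ r (-ρ / r - Real.sqrt ((Qbar v ρ r n D - (1 - ρ ^ 2 / r)) / r)) (v * n) := by
  have hr0 : 0 < r := lt_of_le_of_lt (sq_nonneg ρ) hr
  have hrne : r ≠ 0 := hr0.ne'
  have hvne : v ≠ 0 := hv.ne'
  have hDne : D ≠ 0 := hD0.ne'
  set c : ℝ := 1 - ρ ^ 2 / r with hc
  clear_value c
  have hc0 : 0 < c := by
    have : ρ ^ 2 / r < 1 := (div_lt_one hr0).mpr hr
    rw [hc]; linarith
  have hQid : ∀ α : ℝ, Q ρ r α = r * (α + ρ / r) ^ 2 + c := by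
    intro α; simp only [Q, hc]; field_simp; ring
  have hQpos : ∀ α : ℝ, 0 < Q ρ r α + n := by
    intro α
    have h1 : 0 ≤ r * (α + ρ / r) ^ 2 := mul_nonneg hr0.le (sq_nonneg _)
    rw [hQid]; linarith
  have hQbar : Qbar v ρ r n D - c = (c + n) * (v * r - D) / D := by
    simp only [Qbar, hc]; field_simp; ring
  have hQbc : c ≤ Qbar v ρ r n D := by
    have h1 : 0 ≤ (c + n) * (v * r - D) / D :=
      div_nonneg (mul_nonneg (by linarith) (by linarith)) hD0.le
    linarith [hQbar]
  set t : ℝ := Real.sqrt ((Qbar v ρ r n D - c) / r) with ht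
  have ht0 : 0 ≤ t := Real.sqrt_nonneg _
  have ht2 : t ^ 2 = (Qbar v ρ r n D - c) / r := by
    rw [ht]; exact Real.sq_sqrt (div_nonneg (by linarith) hr0.le)
  clear_value t
  have hrt2 : r * t ^ 2 = Qbar v ρ r n D - c := by
    rw [ht2]; field_simp
  have hsv : v * n / v = n := by field_simp
  have hDPkey : ∀ α : ℝ, DP v ρ r α (v * n) - D
      = D * (Qbar v ρ r n D - Q ρ r α) / (Q ρ r α + n) := by
    intro α
    have hd : (1 + 2 * α * ρ + α ^ 2 * r + n) ≠ 0 := by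
      have := (hQpos α).ne'; simpa [Q] using this
    simp only [DP, Qbar, Q, hsv]
    rw [eq_div_iff hd, sub_mul, mul_sub, sub_mul,
      mul_assoc v ((ρ + r * α) ^ 2 / (1 + 2 * α * ρ + α ^ 2 * r + n)), div_mul_cancel₀ _ hd]
    field_simp
    ring
  have hiff1 : ∀ α : ℝ, DP v ρ r α (v * n) = D ↔ Q ρ r α = Qbar v ρ r n D := by
    intro α
    constructor
    · intro h
      have hk := hDPkey α
      rw [h, sub_self] at hk
      have h2 : D * (Qbar v ρ r n D - Q ρ r α) = 0 :=
        (div_eq_zero_iff.mp hk.symm).resolve_right (hQpos α).ne'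
      have h3 : Qbar v ρ r n D - Q ρ r α = 0 :=
        (mul_eq_zero.mp h2).resolve_left hDne
      linarith
    · intro h
      have hk := hDPkey α
      rw [h, sub_self, mul_zero, zero_div] at hk
      linarith
  have hQp : Q ρ r (-ρ / r + t) = Qbar v ρ r n D := by
    have he : (-ρ / r + t + ρ / r) = t := by ring
    rw [hQid, he]; linarith
  have hQm : Q ρ r (-ρ / r - t) = Qbar v ρ r n D := by
    have he : (-ρ / r - t + ρ / r) = -t := by ring
    rw [hQid, he]
    have h2 : (-t) ^ 2 = t ^ 2 := by ring
    rw [h2]; linarith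
  have hroot : ∀ α : ℝ, Q ρ r α = Qbar v ρ r n D ↔
      (α = -ρ / r + t ∨ α = -ρ / r - t) := by
    intro α
    constructor
    · intro h
      have key : r * ((α - (-ρ / r + t)) * (α - (-ρ / r - t))) = 0 := by
        have h1 : r * ((α - (-ρ / r + t)) * (α - (-ρ / r - t)))
            = r * (α + ρ / r) ^ 2 - r * t ^ 2 := by ring
        rw [h1, hrt2]
        have h2 := hQid α
        rw [h] at h2
        linarith
      have h2 := (mul_eq_zero.mp key).resolve_left hrne
      rcases mul_eq_zero.mp h2 with h3 | h3
      · left; linarith [sub_eq_zero.mp h3]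
      · right; linarith [sub_eq_zero.mp h3]
    · rintro (rfl | rfl)
      · exact hQp
      · exact hQm
  refine ⟨hQbc, fun α => ⟨hiff1 α, (hiff1 α).trans (hroot α)⟩, ?_⟩
  have hd : 0 < Qbar v ρ r n D + n := by
    have := hQpos (-ρ / r + t); rwa [hQp] at this
  have e1 : 1 + (-ρ / r + t) * ρ = c + t * ρ := by
    rw [hc]; field_simp; ring
  have e2 : 1 + (-ρ / r - t) * ρ = c - t * ρ := by
    rw [hc]; field_simp; ring
  simp only [DC, hQp, hQm, hsv, e1, e2]
  apply mul_le_mul_of_nonneg_left _ hv.le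
  apply sub_le_sub_left
  apply (div_le_div_iff_of_pos_right hd).mpr
  nlinarith [mul_nonneg (mul_nonneg hc0.le ht0) hρ]
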